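/- Let f, g be continuously differentiable real functions on a neighborhood of the origin in ℝ² with g nonzero away from the origin, let q = f/g, let h'' = y(g ∂f/∂x − f ∂g/∂x) − x(g ∂f/∂y − f ∂g/∂y), and let X = {(x,y) ≠ (0,0) : h''(x,y) = 0}. Then lim_{(x,y)→(0,0)} q(x,y) = L exists if and only if for every ε > 0 there exists δ > 0 such that |q(x,y) − L| < ε for all (x,y) ∈ X with |(x,y)| < δ. -/

import Mathlib

open Real

lemma key_crit (f g : ℝ × ℝ → ℝ) (U : Set (ℝ × ℝ)) (hU : IsOpen U)
    (hf : ContDiffOn ℝ 1 f U) (hg : ContDiffOn ℝ 1 g U)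
    (a : ℝ × ℝ) (haU : a ∈ U) (hga : g a ≠ 0)
    (hext : IsExtrOn (fun x => f x / g x) {x : ℝ × ℝ | x.1 ^ 2 + x.2 ^ 2 = a.1 ^ 2 + a.2 ^ 2} a) :
    a.2 * (g a * fderiv ℝ f a (1, 0) - f a * fderiv ℝ g a (1, 0)) -
      a.1 * (g a * fderiv ℝ f a (0, 1) - f a * fderiv ℝ g a (0, 1)) = 0 := by
  set f' := fderiv ℝ f a with hf'
  set g' := fderiv ℝ g a with hg'
  have hfd : HasFDerivAt f f' a :=
    ((hf.differentiableOn one_ne_zero).differentiableAt (hU.mem_nhds haU)).hasFDerivAt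
  have hgd : HasFDerivAt g g' a :=
    ((hg.differentiableOn one_ne_zero).differentiableAt (hU.mem_nhds haU)).hasFDerivAt
  -- the rotation curve
  set γ : ℝ → ℝ × ℝ := fun t => (a.1 * Real.cos t - a.2 * Real.sin t,
    a.1 * Real.sin t + a.2 * Real.cos t) with hγ
  have hd1 : HasDerivAt (fun t : ℝ => a.1 * Real.cos t - a.2 * Real.sin t) (-a.2) 0 := by
    simpa [Pi.sub_def] using ((Real.hasDerivAt_cos 0).const_mul a.1).sub
      ((Real.hasDerivAt_sin 0).const_mul a.2)
  have hd2 : HasDerivAt (fun t : ℝ => a.1 * Real.sin t + a.2 * Real.cos t) a.1 0 := by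
    simpa [Pi.add_def] using ((Real.hasDerivAt_sin 0).const_mul a.1).add
      ((Real.hasDerivAt_cos 0).const_mul a.2)
  have hγd : HasDerivAt γ (-a.2, a.1) 0 := hd1.prodMk hd2
  have hγ0 : γ 0 = a := by simp [hγ]
  have hγS : ∀ t, γ t ∈ {x : ℝ × ℝ | x.1 ^ 2 + x.2 ^ 2 = a.1 ^ 2 + a.2 ^ 2} := by
    intro t
    have h := Real.sin_sq_add_cos_sq t
    simp only [hγ, Set.mem_setOf_eq]
    nlinarith [h]
  have hF : HasDerivAt (fun t => f (γ t)) (f' (-a.2, a.1)) 0 :=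
    (hγ0 ▸ hfd).comp_hasDerivAt 0 hγd
  have hG : HasDerivAt (fun t => g (γ t)) (g' (-a.2, a.1)) 0 :=
    (hγ0 ▸ hgd).comp_hasDerivAt 0 hγd
  have hga' : g (γ 0) ≠ 0 := by rw [hγ0]; exact hga
  have hcomp : HasDerivAt (fun t => f (γ t) / g (γ t))
      ((f' (-a.2, a.1) * g (γ 0) - f (γ 0) * g' (-a.2, a.1)) / g (γ 0) ^ 2) 0 :=
    hF.div hG hga'
  have hloc : IsLocalExtr (fun t => f (γ t) / g (γ t)) 0 := by
    rcases hext with hmin | hmax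
    · left
      have : IsMinOn (fun t => f (γ t) / g (γ t)) Set.univ 0 := by
        intro t _
        have := hmin (hγS t)
        simpa [hγ0] using this
      exact this.isLocalMin Filter.univ_mem
    · right
      have : IsMaxOn (fun t => f (γ t) / g (γ t)) Set.univ 0 := by
        intro t _
        have := hmax (hγS t)
        simpa [hγ0] using this
      exact this.isLocalMax Filter.univ_mem
  have hzero := hloc.hasDerivAt_eq_zero hcomp
  rw [hγ0] at hzero
  have h2 : (g a ^ 2 : ℝ) ≠ 0 := pow_ne_zero 2 hga
  have hexp : f' (-a.2, a.1) * g a - f a * g' (-a.2, a.1) = 0 := by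
    field_simp at hzero
    linarith [hzero]
  have hv : ((-a.2, a.1) : ℝ × ℝ) = (-a.2) • ((1 : ℝ), (0 : ℝ)) + a.1 • ((0 : ℝ), (1 : ℝ)) := by
    simp [Prod.ext_iff]
  have hfv : f' (-a.2, a.1) = -a.2 * f' (1, 0) + a.1 * f' (0, 1) := by
    rw [hv, map_add, f'.map_smul, f'.map_smul, smul_eq_mul, smul_eq_mul]
  have hgv : g' (-a.2, a.1) = -a.2 * g' (1, 0) + a.1 * g' (0, 1) := by
    rw [hv, map_add, g'.map_smul, g'.map_smul, smul_eq_mul, smul_eq_mul]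
  rw [hfv, hgv] at hexp
  ring_nf at hexp ⊢
  linarith [hexp]

/-- Let `f, g` be continuously differentiable on a neighborhood of the origin in
`ℝ²` with `g` nonzero away from the origin, `q = f/g`,
`h'' = y(g ∂f/∂x − f ∂g/∂x) − x(g ∂f/∂y − f ∂g/∂y)`, and
`X = {(x,y) ≠ 0 : h''(x,y) = 0}`. Then `lim_{(x,y)→(0,0)} q = L` iff for every `ε > 0` there is
`δ > 0` with `|q p − L| < ε` for all `p ∈ X`, `‖p‖ < δ`. -/
theorem stmt2 (f g : ℝ × ℝ → ℝ) (U : Set (ℝ × ℝ)) (hU : IsOpen U) (h0U : (0 : ℝ × ℝ) ∈ U)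
    (hf : ContDiffOn ℝ 1 f U) (hg : ContDiffOn ℝ 1 g U)
    (hg0 : ∀ p ∈ U, p ≠ 0 → g p ≠ 0) (L : ℝ) :
    (∀ ε > 0, ∃ δ > 0, ∀ p : ℝ × ℝ, p ≠ 0 → ‖p‖ < δ → |f p / g p - L| < ε) ↔
    (∀ ε > 0, ∃ δ > 0, ∀ p : ℝ × ℝ, p ≠ 0 →
      (p.2 * (g p * fderiv ℝ f p (1, 0) - f p * fderiv ℝ g p (1, 0)) -
       p.1 * (g p * fderiv ℝ f p (0, 1) - f p * fderiv ℝ g p (0, 1)) = 0) →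
      ‖p‖ < δ → |f p / g p - L| < ε) := by
  constructor
  · intro h ε hε
    obtain ⟨δ, hδ, hδ'⟩ := h ε hε
    exact ⟨δ, hδ, fun p hp _ hn => hδ' p hp hn⟩
  · intro h ε hε
    obtain ⟨δ, hδpos, hδ⟩ := h ε hε
    obtain ⟨δ₁, hδ₁pos, hball⟩ := Metric.isOpen_iff.1 hU 0 h0U
    refine ⟨min δ δ₁ / 2, by positivity, fun p hp hpn => ?_⟩
    set S : Set (ℝ × ℝ) := {x | x.1 ^ 2 + x.2 ^ 2 = p.1 ^ 2 + p.2 ^ 2} with hS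
    -- S is inside the ball of radius 2‖p‖
    have hnorm_le : ∀ x ∈ S, ‖x‖ ≤ 2 * ‖p‖ := by
      intro x hx
      have hx' : x.1 ^ 2 + x.2 ^ 2 = p.1 ^ 2 + p.2 ^ 2 := hx
      have h1 : |p.1| ≤ ‖p‖ := by
        simpa [Real.norm_eq_abs] using norm_fst_le p
      have h2 : |p.2| ≤ ‖p‖ := by
        simpa [Real.norm_eq_abs] using norm_snd_le p
      have hb1 : |x.1| ≤ 2 * ‖p‖ := by
        have hsq : x.1 ^ 2 ≤ (2 * ‖p‖) ^ 2 := by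
          nlinarith [h1, h2, abs_nonneg p.1, abs_nonneg p.2, norm_nonneg p, sq_abs p.1, sq_abs p.2, sq_nonneg x.2, hx']
        have := abs_le_of_sq_le_sq' hsq (by positivity)
        exact abs_le.2 this
      have hb2 : |x.2| ≤ 2 * ‖p‖ := by
        have hsq : x.2 ^ 2 ≤ (2 * ‖p‖) ^ 2 := by
          nlinarith [h1, h2, abs_nonneg p.1, abs_nonneg p.2, norm_nonneg p, sq_abs p.1, sq_abs p.2, sq_nonneg x.1, hx']
        have := abs_le_of_sq_le_sq' hsq (by positivity)
        exact abs_le.2 this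
      rw [Prod.norm_def, Real.norm_eq_abs, Real.norm_eq_abs]
      exact max_le hb1 hb2
    have hsmall : ∀ x ∈ S, ‖x‖ < min δ δ₁ := by
      intro x hx
      calc ‖x‖ ≤ 2 * ‖p‖ := hnorm_le x hx
        _ < 2 * (min δ δ₁ / 2) := by linarith
        _ = min δ δ₁ := by ring
    have hSU : S ⊆ U := fun x hx => hball (by
      simp only [Metric.mem_ball, dist_zero_right]
      exact lt_of_lt_of_le (hsmall x hx) (min_le_right _ _))
    have hpos : (0 : ℝ) < p.1 ^ 2 + p.2 ^ 2 := by
      rcases Prod.ext_iff.not.1 hp with h'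
      have : p.1 ≠ 0 ∨ p.2 ≠ 0 := by
        by_contra hc; push_neg at hc
        exact hp (Prod.ext hc.1 hc.2)
      rcases this with h1 | h2
      · have : 0 < p.1 ^ 2 := by positivity
        nlinarith [sq_nonneg p.2]
      · have : 0 < p.2 ^ 2 := by positivity
        nlinarith [sq_nonneg p.1]
    have hSne : ∀ x ∈ S, x ≠ 0 := by
      intro x hx hx0
      have hx' : x.1 ^ 2 + x.2 ^ 2 = p.1 ^ 2 + p.2 ^ 2 := hx
      rw [hx0] at hx'
      simp at hx'
      nlinarith
    -- S is compact
    have hclosed : IsClosed S := isClosed_eq (by fun_prop) continuous_const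
    have hcompact : IsCompact S := by
      refine (isCompact_closedBall (0 : ℝ × ℝ) (2 * ‖p‖)).of_isClosed_subset hclosed ?_
      intro x hx
      simp only [Metric.mem_closedBall, dist_zero_right]
      exact hnorm_le x hx
    have hcont : ContinuousOn (fun x => f x / g x) S :=
      ((hf.continuousOn).mono hSU).div ((hg.continuousOn).mono hSU)
        (fun x hx => hg0 x (hSU hx) (hSne x hx))
    have hpS : p ∈ S := rfl
    obtain ⟨a, haS, hamax⟩ := hcompact.exists_isMaxOn ⟨p, hpS⟩ hcont
    obtain ⟨b, hbS, hbmin⟩ := hcompact.exists_isMinOn ⟨p, hpS⟩ hcont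
    have key : ∀ c ∈ S, IsExtrOn (fun x => f x / g x) S c → |f c / g c - L| < ε := by
      intro c hcS hext
      have hcS' : c.1 ^ 2 + c.2 ^ 2 = p.1 ^ 2 + p.2 ^ 2 := hcS
      have hext' : IsExtrOn (fun x => f x / g x)
          {x : ℝ × ℝ | x.1 ^ 2 + x.2 ^ 2 = c.1 ^ 2 + c.2 ^ 2} c := by
        rw [hcS']; exact hext
      have hcrit := key_crit f g U hU hf hg c (hSU hcS)
        (hg0 c (hSU hcS) (hSne c hcS)) hext'
      exact hδ c (hSne c hcS) hcrit (lt_of_lt_of_le (hsmall c hcS) (min_le_left _ _))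
    have ha := key a haS (Or.inr hamax)
    have hb := key b hbS (Or.inl hbmin)
    have h1 : f p / g p ≤ f a / g a := hamax hpS
    have h2 : f b / g b ≤ f p / g p := hbmin hpS
    rw [abs_sub_lt_iff] at ha hb ⊢
    constructor <;> linarith [ha.1, ha.2, hb.1, hb.2]
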